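/- Let p ≥ 1 be an integer and define F(u,v) = (u_i^{2p} v_i)_{i∈ℤ} for u, v ∈ ℓ²(ℤ). Then there exists a constant C > 0 depending only on p such that for all u1, v1, u2, v2 ∈ ℓ²(ℤ) with u1, u2, v2 ∈ ℓ^{4p}: ‖F(u1,v1) − F(u2,v2)‖² ≤ C (‖u1‖_{4p}^{4p} + ‖u2‖_{4p}^{4p} + ‖v2‖_{4p}^{4p}) (‖u1−u2‖² + ‖v1−v2‖²). -/
import Mathlib
open scoped ENNReal

private lemma aux_pow_sub (a c : ℝ) : ∀ n : ℕ,
    |a ^ (n + 1) - c ^ (n + 1)| ≤ (n + 1) * (|a| + |c|) ^ n * |a - c| := by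
  intro n
  induction n with
  | zero => simp
  | succ n ih =>
    have key : a ^ (n + 2) - c ^ (n + 2) = a * (a ^ (n + 1) - c ^ (n + 1)) + (a - c) * c ^ (n + 1) := by
      ring
    have hc : |c ^ (n + 1)| ≤ (|a| + |c|) ^ (n + 1) := by
      rw [abs_pow]
      exact pow_le_pow_left₀ (abs_nonneg c) (by simp [abs_nonneg]) _
    have ha : |a| ≤ |a| + |c| := by simp [abs_nonneg]
    calc |a ^ (n + 2) - c ^ (n + 2)|
        ≤ |a| * |a ^ (n + 1) - c ^ (n + 1)| + |a - c| * |c ^ (n + 1)| := by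
          rw [key]; refine (abs_add_le _ _).trans ?_; rw [abs_mul, abs_mul]
      _ ≤ (|a| + |c|) * ((n + 1) * (|a| + |c|) ^ n * |a - c|) + |a - c| * (|a| + |c|) ^ (n + 1) := by
          refine add_le_add (mul_le_mul ha ih (abs_nonneg _) (by positivity))
            (mul_le_mul_of_nonneg_left hc (abs_nonneg _))
      _ = ((n:ℝ) + 1 + 1) * (|a| + |c|) ^ (n + 1) * |a - c| := by ring
      _ = ((n + 1 : ℕ) + 1) * (|a| + |c|) ^ (n + 1) * |a - c| := by push_cast; ring

private lemma key_ineq (k : ℕ) (a b c d S : ℝ)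
    (h1 : |a| ^ (4 * k + 4) ≤ S) (h2 : |c| ^ (4 * k + 4) ≤ S)
    (h3 : |d| ^ (4 * k + 4) ≤ S) :
    (a ^ (2 * k + 2) * b - c ^ (2 * k + 2) * d) ^ 2
      ≤ (2 + 4 * ((k : ℝ) + 1) ^ 2 * 2 ^ (4 * k + 4)) * S * ((a - c) ^ 2 + (b - d) ^ 2) := by
  have hS : 0 ≤ S := le_trans (by positivity) h1
  set M := max |a| |c| with hM
  have hM0 : 0 ≤ M := le_trans (abs_nonneg a) (le_max_left _ _)
  have hMS : M ^ (4 * k + 4) ≤ S := by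
    rcases le_total |a| |c| with h | h
    · rw [hM, max_eq_right h]; exact h2
    · rw [hM, max_eq_left h]; exact h1
  have hd2 : M ^ (4 * k + 2) * d ^ 2 ≤ 2 * S := by
    have hdd : d ^ 2 = |d| ^ 2 := (sq_abs d).symm
    have hsplit : (4:ℕ) * k + 4 = (4 * k + 2) + 2 := by omega
    rcases le_total |d| M with h | h
    · calc M ^ (4 * k + 2) * d ^ 2 ≤ M ^ (4 * k + 2) * M ^ 2 := by
            rw [hdd]
            exact mul_le_mul_of_nonneg_left (pow_le_pow_left₀ (abs_nonneg d) h 2) (by positivity)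
        _ = M ^ (4 * k + 4) := by rw [← pow_add]
        _ ≤ S := hMS
        _ ≤ 2 * S := by linarith
    · calc M ^ (4 * k + 2) * d ^ 2 ≤ |d| ^ (4 * k + 2) * |d| ^ 2 := by
            rw [hdd]
            exact mul_le_mul_of_nonneg_right (pow_le_pow_left₀ hM0 h _) (by positivity)
        _ = |d| ^ (4 * k + 4) := by rw [← pow_add]
        _ ≤ S := h3
        _ ≤ 2 * S := by linarith
  have hsum : |a| + |c| ≤ 2 * M := by
    have := le_max_left |a| |c|; have := le_max_right |a| |c|
    rw [hM] at *; linarith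
  have hexp : (|a| + |c|) ^ (4 * k + 2) ≤ 2 ^ (4 * k + 2) * M ^ (4 * k + 2) := by
    calc (|a| + |c|) ^ (4 * k + 2) ≤ (2 * M) ^ (4 * k + 2) :=
          pow_le_pow_left₀ (by positivity) hsum _
      _ = 2 ^ (4 * k + 2) * M ^ (4 * k + 2) := mul_pow _ _ _
  have hY : |a ^ (2 * k + 2) - c ^ (2 * k + 2)| ≤
      (2 * (k:ℝ) + 2) * (|a| + |c|) ^ (2 * k + 1) * |a - c| := by
    have h := aux_pow_sub a c (2 * k + 1)
    have e1 : (2:ℕ) * k + 1 + 1 = 2 * k + 2 := by omega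
    rw [e1] at h
    refine h.trans_eq ?_
    push_cast; ring
  have hX2 : (a ^ (2 * k + 2)) ^ 2 * (b - d) ^ 2 ≤ S * (b - d) ^ 2 := by
    have : (a ^ (2 * k + 2)) ^ 2 = |a| ^ (4 * k + 4) := by
      rw [← pow_mul, show (2 * k + 2) * 2 = 4 * k + 4 from by omega]
      exact (Even.pow_abs (⟨2 * k + 2, by omega⟩ : Even (4 * k + 4)) a).symm
    exact mul_le_mul_of_nonneg_right (this ▸ h1) (sq_nonneg _)
  have hY2 : (a ^ (2 * k + 2) - c ^ (2 * k + 2)) ^ 2 * d ^ 2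
      ≤ (2 * (k:ℝ) + 2) ^ 2 * (2 ^ (4 * k + 2) * (2 * S)) * (a - c) ^ 2 := by
    have habs : (a ^ (2 * k + 2) - c ^ (2 * k + 2)) ^ 2
        ≤ ((2 * (k:ℝ) + 2) * (|a| + |c|) ^ (2 * k + 1) * |a - c|) ^ 2 := by
      rw [← sq_abs (a ^ (2 * k + 2) - c ^ (2 * k + 2))]
      exact pow_le_pow_left₀ (abs_nonneg _) hY 2
    have hmd : ((|a| + |c|) ^ (2 * k + 1)) ^ 2 * d ^ 2 ≤ 2 ^ (4 * k + 2) * (2 * S) := by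
      have e2 : ((|a| + |c|) ^ (2 * k + 1)) ^ 2 = (|a| + |c|) ^ (4 * k + 2) := by
        rw [← pow_mul]; congr 1; omega
      rw [e2]
      calc (|a| + |c|) ^ (4 * k + 2) * d ^ 2
          ≤ 2 ^ (4 * k + 2) * M ^ (4 * k + 2) * d ^ 2 :=
            mul_le_mul_of_nonneg_right hexp (sq_nonneg d)
        _ = 2 ^ (4 * k + 2) * (M ^ (4 * k + 2) * d ^ 2) := by ring
        _ ≤ 2 ^ (4 * k + 2) * (2 * S) := by
            exact mul_le_mul_of_nonneg_left hd2 (by positivity)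
    calc (a ^ (2 * k + 2) - c ^ (2 * k + 2)) ^ 2 * d ^ 2
        ≤ ((2 * (k:ℝ) + 2) * (|a| + |c|) ^ (2 * k + 1) * |a - c|) ^ 2 * d ^ 2 :=
          mul_le_mul_of_nonneg_right habs (sq_nonneg d)
      _ = (2 * (k:ℝ) + 2) ^ 2 * (((|a| + |c|) ^ (2 * k + 1)) ^ 2 * d ^ 2) * (a - c) ^ 2 := by
          rw [mul_pow, mul_pow, sq_abs]; ring
      _ ≤ (2 * (k:ℝ) + 2) ^ 2 * (2 ^ (4 * k + 2) * (2 * S)) * (a - c) ^ 2 := by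
          refine mul_le_mul_of_nonneg_right (mul_le_mul_of_nonneg_left hmd (by positivity))
            (sq_nonneg _)
  have hsq : (a ^ (2 * k + 2) * b - c ^ (2 * k + 2) * d) ^ 2
      ≤ 2 * ((a ^ (2 * k + 2)) ^ 2 * (b - d) ^ 2)
        + 2 * ((a ^ (2 * k + 2) - c ^ (2 * k + 2)) ^ 2 * d ^ 2) := by
    nlinarith [sq_nonneg (a ^ (2 * k + 2) * (b - d) - (a ^ (2 * k + 2) - c ^ (2 * k + 2)) * d)]
  have hP : (2:ℝ) ^ (4 * k + 4) = 4 * 2 ^ (4 * k + 2) := by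
    have : (4:ℕ) * k + 4 = (4 * k + 2) + 2 := by omega
    rw [this, pow_add]; ring
  rw [hP]
  nlinarith [mul_nonneg hS (sq_nonneg (a - c)),
    mul_nonneg (mul_nonneg (by positivity : (0:ℝ) ≤ ((k:ℝ) + 1) ^ 2 * 2 ^ (4 * k + 2)) hS)
      (sq_nonneg (b - d)), hX2, hY2, hsq]

private lemma sq_summable {u : ℤ → ℝ} (h : Memℓp u 2) : Summable fun i => u i ^ 2 := by
  have h' := h.summable (by norm_num : 0 < (2 : ℝ≥0∞).toReal)
  refine h'.congr fun i => ?_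
  rw [Real.norm_eq_abs]
  norm_num

private lemma abs_pow_summable {u : ℤ → ℝ} (h : Summable fun i => u i ^ 2) (n : ℕ) :
    Summable fun i => |u i| ^ (n + 2) := by
  have hb : ∀ i, |u i| ≤ Real.sqrt (∑' j, u j ^ 2) := fun i => by
    rw [← Real.sqrt_sq_eq_abs]
    exact Real.sqrt_le_sqrt (Summable.le_tsum h i fun j _ => sq_nonneg _)
  refine Summable.of_nonneg_of_le (fun i => by positivity) (fun i => ?_)
    (h.mul_left ((Real.sqrt (∑' j, u j ^ 2)) ^ n))
  rw [pow_add, sq_abs]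
  exact mul_le_mul_of_nonneg_right (pow_le_pow_left₀ (abs_nonneg _) (hb i) n) (sq_nonneg _)

/-- For `F(u,v) = (u_i^{2p} v_i)_i` there is `C > 0` depending only on `p ≥ 1`
such that `‖F(u1,v1) − F(u2,v2)‖² ≤ C(‖u1‖_{4p}^{4p} + ‖u2‖_{4p}^{4p} + ‖v2‖_{4p}^{4p})
(‖u1−u2‖² + ‖v1−v2‖²)` on `ℓ²(ℤ)`. -/
theorem stmt_6 (p : ℕ) (hp : 1 ≤ p) :
    ∃ C : ℝ, 0 < C ∧
      ∀ u1 v1 u2 v2 : ℤ → ℝ, Memℓp u1 2 → Memℓp v1 2 → Memℓp u2 2 → Memℓp v2 2 →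
        (∑' i : ℤ, (u1 i ^ (2 * p) * v1 i - u2 i ^ (2 * p) * v2 i) ^ 2)
          ≤ C * ((∑' i : ℤ, |u1 i| ^ (4 * p)) + (∑' i : ℤ, |u2 i| ^ (4 * p))
              + (∑' i : ℤ, |v2 i| ^ (4 * p)))
            * ((∑' i : ℤ, (u1 i - u2 i) ^ 2) + (∑' i : ℤ, (v1 i - v2 i) ^ 2)) := by
  obtain ⟨k, rfl⟩ := Nat.exists_eq_add_of_le hp
  refine ⟨2 + 4 * ((k : ℝ) + 1) ^ 2 * 2 ^ (4 * k + 4), by positivity, ?_⟩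
  intro u1 v1 u2 v2 hu1 hv1 hu2 hv2
  simp only [show 2 * (1 + k) = 2 * k + 2 from by ring, show 4 * (1 + k) = 4 * k + 4 from by ring]
  have s1 := sq_summable hu1
  have s2 := sq_summable hu2
  have s3 := sq_summable hv2
  have hd1 : Summable fun i => (u1 i - u2 i) ^ 2 := sq_summable (hu1.sub hu2)
  have hd2 : Summable fun i => (v1 i - v2 i) ^ 2 := sq_summable (hv1.sub hv2)
  have e44 : (4 : ℕ) * k + 2 + 2 = 4 * k + 4 := by omega
  have A1 : Summable fun i => |u1 i| ^ (4 * k + 4) := by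
    have := abs_pow_summable s1 (4 * k + 2); rwa [e44] at this
  have A2 : Summable fun i => |u2 i| ^ (4 * k + 4) := by
    have := abs_pow_summable s2 (4 * k + 2); rwa [e44] at this
  have A3 : Summable fun i => |v2 i| ^ (4 * k + 4) := by
    have := abs_pow_summable s3 (4 * k + 2); rwa [e44] at this
  set T : ℝ := (∑' i : ℤ, |u1 i| ^ (4 * k + 4)) + (∑' i : ℤ, |u2 i| ^ (4 * k + 4))
      + (∑' i : ℤ, |v2 i| ^ (4 * k + 4)) with hT
  have hn1 : (0:ℝ) ≤ ∑' i : ℤ, |u1 i| ^ (4 * k + 4) := tsum_nonneg fun i => by positivity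
  have hn2 : (0:ℝ) ≤ ∑' i : ℤ, |u2 i| ^ (4 * k + 4) := tsum_nonneg fun i => by positivity
  have hn3 : (0:ℝ) ≤ ∑' i : ℤ, |v2 i| ^ (4 * k + 4) := tsum_nonneg fun i => by positivity
  have hb1 : ∀ i, |u1 i| ^ (4 * k + 4) ≤ T := fun i => by
    have := Summable.le_tsum A1 i (fun j _ => by positivity); linarith
  have hb2 : ∀ i, |u2 i| ^ (4 * k + 4) ≤ T := fun i => by
    have := Summable.le_tsum A2 i (fun j _ => by positivity); linarith
  have hb3 : ∀ i, |v2 i| ^ (4 * k + 4) ≤ T := fun i => by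
    have := Summable.le_tsum A3 i (fun j _ => by positivity); linarith
  set C : ℝ := 2 + 4 * ((k : ℝ) + 1) ^ 2 * 2 ^ (4 * k + 4) with hC
  have hpt : ∀ i : ℤ, (u1 i ^ (2 * k + 2) * v1 i - u2 i ^ (2 * k + 2) * v2 i) ^ 2
      ≤ C * T * ((u1 i - u2 i) ^ 2 + (v1 i - v2 i) ^ 2) := fun i =>
    key_ineq k (u1 i) (v1 i) (u2 i) (v2 i) T (hb1 i) (hb2 i) (hb3 i)
  have hg : Summable fun i => C * T * ((u1 i - u2 i) ^ 2 + (v1 i - v2 i) ^ 2) :=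
    (hd1.add hd2).mul_left _
  calc (∑' i : ℤ, (u1 i ^ (2 * k + 2) * v1 i - u2 i ^ (2 * k + 2) * v2 i) ^ 2)
      ≤ ∑' i : ℤ, C * T * ((u1 i - u2 i) ^ 2 + (v1 i - v2 i) ^ 2) :=
        Summable.tsum_le_tsum hpt (Summable.of_nonneg_of_le (fun i => sq_nonneg _) hpt hg) hg
    _ = C * T * ((∑' i : ℤ, (u1 i - u2 i) ^ 2) + (∑' i : ℤ, (v1 i - v2 i) ^ 2)) := by
        rw [tsum_mul_left, Summable.tsum_add hd1 hd2]
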